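/- Suppose ε : A → 𝕜 is an augmentation of (A,∂) satisfying ε ∘ σ = ε, and let k_1,…,k_n ∈ 𝕜 be arbitrary. Then there exists a unique pair (ε', K), where ε' : A → 𝕜 is a 𝕜-algebra homomorphism and K : A → 𝕜 is an (ε,ε')-derivation, such that K(x_j) = k_j for every j and ε − ε' = K ∘ ∂ as 𝕜-linear maps A → 𝕜. Moreover, this ε' is itself an augmentation, i.e. ε' ∘ ∂ = 0. (This is Lemma 2.2 of the paper, the inductive construction, via the height filtration, of the augmentation homotopic to ε with prescribed homotopy values on the generators.) -/

import Mathlib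

namespace CHA

variable {𝕜 : Type*} [Field 𝕜] {n : ℕ}

noncomputable def Phi (ε : FreeAlgebra 𝕜 (Fin n) →ₐ[𝕜] 𝕜) (k t : Fin n → 𝕜) :
    FreeAlgebra 𝕜 (Fin n) →ₐ[𝕜] Matrix (Fin 2) (Fin 2) 𝕜 :=
  FreeAlgebra.lift 𝕜 fun j => !![ε (FreeAlgebra.ι 𝕜 j), k j; 0, t j]

lemma Phi_ι (ε : FreeAlgebra 𝕜 (Fin n) →ₐ[𝕜] 𝕜) (k t : Fin n → 𝕜) (j : Fin n) :
    Phi ε k t (FreeAlgebra.ι 𝕜 j) = !![ε (FreeAlgebra.ι 𝕜 j), k j; 0, t j] := by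
  simp [Phi]

lemma Phi_local (ε : FreeAlgebra 𝕜 (Fin n) →ₐ[𝕜] 𝕜) (k : Fin n → 𝕜) {s s' : Fin n → 𝕜}
    {j : Fin n} (h : ∀ i, i < j → s i = s' i) {u : FreeAlgebra 𝕜 (Fin n)}
    (hu : u ∈ Algebra.adjoin 𝕜 (FreeAlgebra.ι 𝕜 '' {i : Fin n | i < j})) :
    Phi ε k s u = Phi ε k s' u := by
  induction hu using Algebra.adjoin_induction with
  | mem x hx => obtain ⟨i, hi, rfl⟩ := hx; rw [Phi_ι, Phi_ι, h i hi]
  | algebraMap r => simp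
  | add x y _ _ h1 h2 => simp [map_add, h1, h2]
  | mul x y _ _ h1 h2 => simp [map_mul, h1, h2]

noncomputable def tFun (ε : FreeAlgebra 𝕜 (Fin n) →ₐ[𝕜] 𝕜) (k : Fin n → 𝕜)
    (D : FreeAlgebra 𝕜 (Fin n) →ₗ[𝕜] FreeAlgebra 𝕜 (Fin n)) : Fin n → 𝕜
  | j => ε (FreeAlgebra.ι 𝕜 j) -
      Phi ε k (fun i => if _ : i < j then tFun ε k D i else 0) (D (FreeAlgebra.ι 𝕜 j)) 0 1
  termination_by j => (j : ℕ)

lemma tFun_spec (ε : FreeAlgebra 𝕜 (Fin n) →ₐ[𝕜] 𝕜) (k : Fin n → 𝕜)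
    (D : FreeAlgebra 𝕜 (Fin n) →ₗ[𝕜] FreeAlgebra 𝕜 (Fin n)) (j : Fin n)
    (hj : D (FreeAlgebra.ι 𝕜 j) ∈ Algebra.adjoin 𝕜 (FreeAlgebra.ι 𝕜 '' {i : Fin n | i < j})) :
    tFun ε k D j = ε (FreeAlgebra.ι 𝕜 j) -
      Phi ε k (tFun ε k D) (D (FreeAlgebra.ι 𝕜 j)) 0 1 := by
  rw [tFun]
  rw [Phi_local ε k (s := fun i => if _ : i < j then tFun ε k D i else 0)
    (s' := tFun ε k D) (fun i hi => dif_pos hi) hj]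

lemma Phi_struct (ε : FreeAlgebra 𝕜 (Fin n) →ₐ[𝕜] 𝕜) (k t : Fin n → 𝕜)
    (u : FreeAlgebra 𝕜 (Fin n)) :
    Phi ε k t u 1 0 = 0 ∧ Phi ε k t u 0 0 = ε u ∧
      Phi ε k t u 1 1 = (FreeAlgebra.lift 𝕜 t : _ →ₐ[𝕜] 𝕜) u := by
  induction u with
  | grade0 r => simp [Matrix.algebraMap_matrix_apply]
  | grade1 i => simp [Phi_ι]
  | mul a b ha hb =>
      obtain ⟨ha0, ha1, ha2⟩ := ha; obtain ⟨hb0, hb1, hb2⟩ := hb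
      refine ⟨?_, ?_, ?_⟩ <;>
        simp [map_mul, Matrix.mul_apply, Fin.sum_univ_two, ha0, ha1, ha2, hb0, hb1, hb2]
  | add a b ha hb =>
      obtain ⟨ha0, ha1, ha2⟩ := ha; obtain ⟨hb0, hb1, hb2⟩ := hb
      refine ⟨?_, ?_, ?_⟩ <;> simp [map_add, *]

noncomputable def Kmap (ε : FreeAlgebra 𝕜 (Fin n) →ₐ[𝕜] 𝕜) (k t : Fin n → 𝕜) :
    FreeAlgebra 𝕜 (Fin n) →ₗ[𝕜] 𝕜 where
  toFun u := Phi ε k t u 0 1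
  map_add' u v := by simp [map_add]
  map_smul' c u := by simp [map_smul]

lemma Kmap_mul (ε : FreeAlgebra 𝕜 (Fin n) →ₐ[𝕜] 𝕜) (k t : Fin n → 𝕜)
    (u v : FreeAlgebra 𝕜 (Fin n)) :
    Kmap ε k t (u * v) = ε u * Kmap ε k t v +
      Kmap ε k t u * (FreeAlgebra.lift 𝕜 t : _ →ₐ[𝕜] 𝕜) v := by
  have hu := Phi_struct ε k t u
  have hv := Phi_struct ε k t v
  simp only [Kmap, LinearMap.coe_mk, AddHom.coe_mk, map_mul, Matrix.mul_apply,
    Fin.sum_univ_two, hu.2.1, hv.1, hv.2.2]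

lemma Kmap_ι (ε : FreeAlgebra 𝕜 (Fin n) →ₐ[𝕜] 𝕜) (k t : Fin n → 𝕜) (j : Fin n) :
    Kmap ε k t (FreeAlgebra.ι 𝕜 j) = k j := by
  simp [Kmap, Phi_ι]

lemma Kmap_algebraMap (ε : FreeAlgebra 𝕜 (Fin n) →ₐ[𝕜] 𝕜) (k t : Fin n → 𝕜) (r : 𝕜) :
    Kmap ε k t (algebraMap 𝕜 (FreeAlgebra 𝕜 (Fin n)) r) = 0 := by
  simp [Kmap, AlgHom.commutes, Matrix.algebraMap_matrix_apply]

section Main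

variable (σ : FreeAlgebra 𝕜 (Fin n) →ₐ[𝕜] FreeAlgebra 𝕜 (Fin n))
    (D : FreeAlgebra 𝕜 (Fin n) →ₗ[𝕜] FreeAlgebra 𝕜 (Fin n))
    (hleib : ∀ u v : FreeAlgebra 𝕜 (Fin n), D (u * v) = D u * v + σ u * D v)
    (hDD : ∀ u : FreeAlgebra 𝕜 (Fin n), D (D u) = 0)
    (hheight : ∀ j : Fin n,
      D (FreeAlgebra.ι 𝕜 j) ∈ Algebra.adjoin 𝕜 (FreeAlgebra.ι 𝕜 '' {k : Fin n | k < j}))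
    (ε : FreeAlgebra 𝕜 (Fin n) →ₐ[𝕜] 𝕜)
    (hεD : ∀ u : FreeAlgebra 𝕜 (Fin n), ε (D u) = 0)
    (hεσ : ∀ u : FreeAlgebra 𝕜 (Fin n), ε (σ u) = ε u)
    (k : Fin n → 𝕜)

include hleib in
lemma D_one : D (1 : FreeAlgebra 𝕜 (Fin n)) = 0 := by
  have h := hleib 1 1
  simp only [one_mul, mul_one, map_one] at h
  exact (right_eq_add.mp h)

include hleib in
lemma D_algebraMap (r : 𝕜) : D (algebraMap 𝕜 (FreeAlgebra 𝕜 (Fin n)) r) = 0 := by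
  rw [Algebra.algebraMap_eq_smul_one, map_smul, D_one σ D hleib, smul_zero]

include hleib hDD hheight hεD hεσ in
/-- The main identity: `ε - ε' = K ∘ D` and `ε' ∘ D = 0`. -/
lemma main_identity : ∀ u : FreeAlgebra 𝕜 (Fin n),
    ε u - (FreeAlgebra.lift 𝕜 (tFun ε k D) : _ →ₐ[𝕜] 𝕜) u = Kmap ε k (tFun ε k D) (D u) ∧
    (FreeAlgebra.lift 𝕜 (tFun ε k D) : _ →ₐ[𝕜] 𝕜) (D u) = 0 := by
  set t := tFun ε k D with ht
  set E : FreeAlgebra 𝕜 (Fin n) →ₐ[𝕜] 𝕜 := FreeAlgebra.lift 𝕜 t with hE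
  set K : FreeAlgebra 𝕜 (Fin n) →ₗ[𝕜] 𝕜 := Kmap ε k t with hK
  -- closure lemmas
  have Palg : ∀ r : 𝕜, ε (algebraMap 𝕜 _ r) - E (algebraMap 𝕜 _ r) =
        K (D (algebraMap 𝕜 _ r)) ∧ E (D (algebraMap 𝕜 _ r)) = 0 := by
    intro r
    rw [D_algebraMap σ D hleib]
    simp
  have Pmul : ∀ u v : FreeAlgebra 𝕜 (Fin n),
      (ε u - E u = K (D u) ∧ E (D u) = 0) → (ε v - E v = K (D v) ∧ E (D v) = 0) →
      (ε (u * v) - E (u * v) = K (D (u * v)) ∧ E (D (u * v)) = 0) := by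
    intro u v hu hv
    constructor
    · rw [hleib, map_add, Kmap_mul, Kmap_mul, hεD, hεσ, hv.2, ← hK, ← hE, ← hu.1, ← hv.1,
        map_mul, map_mul]
      ring
    · rw [hleib, map_add, map_mul, map_mul, hu.2, hv.2, zero_mul, mul_zero, add_zero]
  have Padd : ∀ u v : FreeAlgebra 𝕜 (Fin n),
      (ε u - E u = K (D u) ∧ E (D u) = 0) → (ε v - E v = K (D v) ∧ E (D v) = 0) →
      (ε (u + v) - E (u + v) = K (D (u + v)) ∧ E (D (u + v)) = 0) := by
    intro u v hu hv
    constructor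
    · rw [map_add, map_add, map_add, map_add, ← hu.1, ← hv.1]; ring
    · rw [map_add, map_add, hu.2, hv.2, add_zero]
  -- generators, by strong induction
  have hgen : ∀ m : ℕ, ∀ j : Fin n, (j : ℕ) < m →
      (ε (FreeAlgebra.ι 𝕜 j) - E (FreeAlgebra.ι 𝕜 j) = K (D (FreeAlgebra.ι 𝕜 j)) ∧
        E (D (FreeAlgebra.ι 𝕜 j)) = 0) := by
    intro m
    induction m with
    | zero => intro j hj; exact absurd hj (Nat.not_lt_zero _)
    | succ m ih =>
      intro j hj
      have hF : ∀ u ∈ Algebra.adjoin 𝕜 (FreeAlgebra.ι 𝕜 '' {i : Fin n | i < j}),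
          ε u - E u = K (D u) ∧ E (D u) = 0 := by
        intro u hu
        induction hu using Algebra.adjoin_induction with
        | mem x hx =>
            obtain ⟨i, hi, rfl⟩ := hx
            exact ih i (by have := Fin.lt_def.mp hi; omega)
        | algebraMap r => exact Palg r
        | add x y _ _ h1 h2 => exact Padd x y h1 h2
        | mul x y _ _ h1 h2 => exact Pmul x y h1 h2
      have hDj := hF _ (hheight j)
      constructor
      · have hKD : K (D (FreeAlgebra.ι 𝕜 j)) = Phi ε k t (D (FreeAlgebra.ι 𝕜 j)) 0 1 := rfl
        have hEι : E (FreeAlgebra.ι 𝕜 j) = t j := FreeAlgebra.lift_ι_apply _ _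
        rw [hEι, hKD, ht, tFun_spec ε k D j (hheight j)]
        ring
      · have h1 := hDj.1
        rw [hDD, map_zero] at h1
        rw [sub_eq_zero] at h1
        rw [← h1]
        exact hεD _
  intro u
  induction u with
  | grade0 r => exact Palg r
  | grade1 i => exact hgen ((i : ℕ) + 1) i (Nat.lt_succ_self _)
  | mul a b ha hb => exact Pmul a b ha hb
  | add a b ha hb => exact Padd a b ha hb

include hleib hDD hheight hεD hεσ in
/-- Uniqueness of the pair. -/
lemma unique_pair (ε₁ : FreeAlgebra 𝕜 (Fin n) →ₐ[𝕜] 𝕜)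
    (K₁ : FreeAlgebra 𝕜 (Fin n) →ₗ[𝕜] 𝕜)
    (h1 : ∀ u v : FreeAlgebra 𝕜 (Fin n), K₁ (u * v) = ε u * K₁ v + K₁ u * ε₁ v)
    (h2 : ∀ j : Fin n, K₁ (FreeAlgebra.ι 𝕜 j) = k j)
    (h3 : ∀ u : FreeAlgebra 𝕜 (Fin n), ε u - ε₁ u = K₁ (D u)) :
    ε₁ = (FreeAlgebra.lift 𝕜 (tFun ε k D) : _ →ₐ[𝕜] 𝕜) ∧ K₁ = Kmap ε k (tFun ε k D) := by
  set t := tFun ε k D with ht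
  set E : FreeAlgebra 𝕜 (Fin n) →ₐ[𝕜] 𝕜 := FreeAlgebra.lift 𝕜 t with hE
  set K : FreeAlgebra 𝕜 (Fin n) →ₗ[𝕜] 𝕜 := Kmap ε k t with hK
  have hmain := main_identity σ D hleib hDD hheight ε hεD hεσ k
  have hK1one : K₁ (1 : FreeAlgebra 𝕜 (Fin n)) = 0 := by
    have := h1 1 1
    simp only [one_mul, mul_one, map_one] at this
    exact (right_eq_add.mp this)
  have hK1alg : ∀ r : 𝕜, K₁ (algebraMap 𝕜 (FreeAlgebra 𝕜 (Fin n)) r) = 0 := by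
    intro r
    rw [Algebra.algebraMap_eq_smul_one, map_smul, hK1one, smul_zero]
  -- generators agree, by strong induction
  have hgen : ∀ m : ℕ, ∀ j : Fin n, (j : ℕ) < m →
      ε₁ (FreeAlgebra.ι 𝕜 j) = E (FreeAlgebra.ι 𝕜 j) := by
    intro m
    induction m with
    | zero => intro j hj; exact absurd hj (Nat.not_lt_zero _)
    | succ m ih =>
      intro j hj
      have hprev : ∀ i : Fin n, i < j → ε₁ (FreeAlgebra.ι 𝕜 i) = E (FreeAlgebra.ι 𝕜 i) :=
        fun i hi => ih i (by have := Fin.lt_def.mp hi; omega)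
      have heps : ∀ u ∈ Algebra.adjoin 𝕜 (FreeAlgebra.ι 𝕜 '' {i : Fin n | i < j}),
          ε₁ u = E u := by
        intro u hu
        induction hu using Algebra.adjoin_induction with
        | mem x hx => obtain ⟨i, hi, rfl⟩ := hx; exact hprev i hi
        | algebraMap r => simp
        | add x y _ _ hx hy => rw [map_add, map_add, hx, hy]
        | mul x y _ _ hx hy => rw [map_mul, map_mul, hx, hy]
      have hKeq : ∀ u ∈ Algebra.adjoin 𝕜 (FreeAlgebra.ι 𝕜 '' {i : Fin n | i < j}),
          K₁ u = K u := by
        intro u hu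
        induction hu using Algebra.adjoin_induction with
        | mem x hx => obtain ⟨i, _, rfl⟩ := hx; rw [h2 i, hK, Kmap_ι]
        | algebraMap r => rw [hK1alg r, hK, Kmap_algebraMap]
        | add x y _ _ hx hy => rw [map_add, map_add, hx, hy]
        | mul x y hxm hym hx hy =>
            rw [h1 x y, hK, Kmap_mul, ← hK, ← hE, hx, hy, heps y hym]
      have e1 : ε₁ (FreeAlgebra.ι 𝕜 j) = ε (FreeAlgebra.ι 𝕜 j) - K₁ (D (FreeAlgebra.ι 𝕜 j)) := by
        have h := h3 (FreeAlgebra.ι 𝕜 j); linear_combination -h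
      rw [e1, hKeq _ (hheight j)]
      have e2 := (hmain (FreeAlgebra.ι 𝕜 j)).1
      rw [← hE, ← hK] at e2
      linear_combination e2
  have hE1 : ε₁ = E := by
    have : ∀ u, ε₁ u = E u := by
      intro u
      induction u with
      | grade0 r => simp
      | grade1 i => exact hgen ((i : ℕ) + 1) i (Nat.lt_succ_self _)
      | mul a b ha hb => rw [map_mul, map_mul, ha, hb]
      | add a b ha hb => rw [map_add, map_add, ha, hb]
    exact AlgHom.ext this
  have hKe : K₁ = K := by
    have : ∀ u, K₁ u = K u := by
      intro u
      induction u with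
      | grade0 r => rw [hK1alg, hK, Kmap_algebraMap]
      | grade1 i => rw [h2, hK, Kmap_ι]
      | mul a b ha hb =>
          rw [h1, hK, Kmap_mul, ← hK, ← hE, ha, hb, hE1]
      | add a b ha hb => rw [map_add, map_add, ha, hb]
    exact LinearMap.ext this
  exact ⟨hE1, hKe⟩

end Main

end CHA

/-- Lemma 2.2 of the paper. Let `A` be the free algebra on
generators `x_1, …, x_n` over a field `𝕜`, `σ : A → A` an algebra map, and
`∂ : A → A` a `𝕜`-linear map satisfying the twisted Leibniz rule
`∂(uv) = ∂(u)v + σ(u)∂(v)`, `∂ ∘ ∂ = 0` and the height-filtration condition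
`∂ x_j ∈ F_{j-1}` (the subalgebra generated by the earlier generators).
If `ε : A → 𝕜` is an augmentation with `ε ∘ σ = ε`, and `k_1, …, k_n ∈ 𝕜`, then
there is a unique pair `(ε', K)` with `ε'` an algebra map, `K` an
`(ε,ε')`-derivation, `K x_j = k_j`, and `ε - ε' = K ∘ ∂`; moreover any such `ε'`
is itself an augmentation. -/
theorem construct_homotopic_augmentation
    {𝕜 : Type*} [Field 𝕜] {n : ℕ}
    (σ : FreeAlgebra 𝕜 (Fin n) →ₐ[𝕜] FreeAlgebra 𝕜 (Fin n))
    (D : FreeAlgebra 𝕜 (Fin n) →ₗ[𝕜] FreeAlgebra 𝕜 (Fin n))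
    (hleib : ∀ u v : FreeAlgebra 𝕜 (Fin n), D (u * v) = D u * v + σ u * D v)
    (hDD : ∀ u : FreeAlgebra 𝕜 (Fin n), D (D u) = 0)
    (hheight : ∀ j : Fin n,
      D (FreeAlgebra.ι 𝕜 j) ∈ Algebra.adjoin 𝕜 (FreeAlgebra.ι 𝕜 '' {k : Fin n | k < j}))
    (ε : FreeAlgebra 𝕜 (Fin n) →ₐ[𝕜] 𝕜)
    (hεD : ∀ u : FreeAlgebra 𝕜 (Fin n), ε (D u) = 0)
    (hεσ : ∀ u : FreeAlgebra 𝕜 (Fin n), ε (σ u) = ε u)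
    (k : Fin n → 𝕜) :
    (∃! p : (FreeAlgebra 𝕜 (Fin n) →ₐ[𝕜] 𝕜) × (FreeAlgebra 𝕜 (Fin n) →ₗ[𝕜] 𝕜),
        (∀ u v : FreeAlgebra 𝕜 (Fin n), p.2 (u * v) = ε u * p.2 v + p.2 u * p.1 v) ∧
        (∀ j : Fin n, p.2 (FreeAlgebra.ι 𝕜 j) = k j) ∧
        (∀ u : FreeAlgebra 𝕜 (Fin n), ε u - p.1 u = p.2 (D u))) ∧
    (∀ p : (FreeAlgebra 𝕜 (Fin n) →ₐ[𝕜] 𝕜) × (FreeAlgebra 𝕜 (Fin n) →ₗ[𝕜] 𝕜),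
        ((∀ u v : FreeAlgebra 𝕜 (Fin n), p.2 (u * v) = ε u * p.2 v + p.2 u * p.1 v) ∧
         (∀ j : Fin n, p.2 (FreeAlgebra.ι 𝕜 j) = k j) ∧
         (∀ u : FreeAlgebra 𝕜 (Fin n), ε u - p.1 u = p.2 (D u))) →
        ∀ u : FreeAlgebra 𝕜 (Fin n), p.1 (D u) = 0) := by
  constructor
  · refine ⟨⟨FreeAlgebra.lift 𝕜 (CHA.tFun ε k D), CHA.Kmap ε k (CHA.tFun ε k D)⟩,
      ⟨?_, ?_, ?_⟩, ?_⟩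
    · exact fun u v => CHA.Kmap_mul ε k _ u v
    · exact fun j => CHA.Kmap_ι ε k _ j
    · exact fun u => (CHA.main_identity σ D hleib hDD hheight ε hεD hεσ k u).1
    · rintro ⟨ε₁, K₁⟩ ⟨h1, h2, h3⟩
      obtain ⟨hA, hB⟩ := CHA.unique_pair σ D hleib hDD hheight ε hεD hεσ k ε₁ K₁ h1 h2 h3
      exact Prod.ext hA hB
  · rintro ⟨ε₁, K₁⟩ ⟨h1, h2, h3⟩ u
    have h := h3 (D u)
    rw [hDD, map_zero, hεD] at h
    linear_combination -h
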